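/- Let θ ∈ (0,1) and a > 0. Let (G_i)_{i≥1} be i.i.d. non-negative integer-valued random variables with P(G_i = j) = 2^{−j−1} for every integer j ≥ 0, set N_ℓ = G_1 + ⋯ + G_ℓ, and let τ be a non-negative integer-valued random variable, independent of the sequence (G_i), such that m^{1−θ}·P(τ > m) → a as m → ∞. Then ℓ^{1−θ}·P(τ > N_ℓ) → a as ℓ → ∞. -/

import Mathlib

open MeasureTheory ProbabilityTheory Filter Topology

lemma geom_moment {Ω : Type*} [MeasurableSpace Ω] (μ : Measure Ω) [IsProbabilityMeasure μ]
    (Y : Ω → ℕ) (hY : Measurable Y)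
    (h : ∀ n : ℕ, μ {ω | Y ω = n} = (2 : ENNReal)⁻¹ ^ (n + 1))
    (f : ℕ → ℝ) (hf : ∀ n, 0 ≤ f n)
    (hs : Summable fun n => f n * (1/2 : ℝ) ^ (n + 1)) :
    Integrable (fun ω => f (Y ω)) μ ∧
      ∫ ω, f (Y ω) ∂μ = ∑' n : ℕ, f n * (1/2 : ℝ) ^ (n + 1) := by
  have hmap : ∀ n : ℕ, μ.map Y {n} = (2 : ENNReal)⁻¹ ^ (n + 1) := by
    intro n
    rw [Measure.map_apply hY (measurableSet_singleton n)]
    exact h n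
  have hmapR : ∀ n : ℕ, (μ.map Y {n}).toReal = (1/2 : ℝ) ^ (n + 1) := by
    intro n; rw [hmap n]; simp [ENNReal.toReal_pow]
  have hmeasf : Measurable f := measurable_from_top
  have hint : Integrable f (μ.map Y) := by
    refine ⟨hmeasf.aestronglyMeasurable, ?_⟩
    rw [hasFiniteIntegral_iff_norm]
    have : ∀ n : ℕ, ENNReal.ofReal ‖f n‖ = ENNReal.ofReal (f n) := by
      intro n; rw [Real.norm_of_nonneg (hf n)]
    calc ∫⁻ n, ENNReal.ofReal ‖f n‖ ∂(μ.map Y)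
        = ∑' n : ℕ, ENNReal.ofReal ‖f n‖ * μ.map Y {n} := lintegral_countable' _
      _ = ∑' n : ℕ, ENNReal.ofReal (f n * (1/2 : ℝ) ^ (n + 1)) := by
          congr 1; ext n
          rw [this n, hmap n, ENNReal.ofReal_mul (hf n)]
          congr 1
          rw [ENNReal.ofReal_pow (by norm_num : (0:ℝ) ≤ 1/2), one_div,
            ENNReal.ofReal_inv_of_pos (by norm_num)]
          norm_num
      _ = ENNReal.ofReal (∑' n : ℕ, f n * (1/2 : ℝ) ^ (n + 1)) := by
          rw [ENNReal.ofReal_tsum_of_nonneg (fun n => mul_nonneg (hf n) (by positivity)) hs]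
      _ < ⊤ := ENNReal.ofReal_lt_top
  have hintc : Integrable (fun ω => f (Y ω)) μ :=
    (integrable_map_measure hmeasf.aestronglyMeasurable hY.aemeasurable).mp hint
  refine ⟨hintc, ?_⟩
  rw [← integral_map hY.aemeasurable hmeasf.aestronglyMeasurable,
    integral_countable' hint]
  congr 1; ext n
  rw [measureReal_def, hmapR n, smul_eq_mul, mul_comm]

lemma summable_geom_mul (k : ℕ) :
    Summable (fun n : ℕ => ((n : ℝ)) ^ k * (1/2 : ℝ) ^ (n + 1)) := by
  have h := summable_pow_mul_geometric_of_norm_lt_one (R := ℝ) k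
    (r := 1/2) (by rw [Real.norm_eq_abs, abs_of_pos] <;> norm_num)
  have := h.mul_right (1/2 : ℝ)
  refine this.congr fun n => ?_
  rw [pow_succ]; ring

lemma tsum_geom_one : ∑' n : ℕ, ((n : ℝ)) * (1/2 : ℝ) ^ (n + 1) = 1 := by
  have h := tsum_coe_mul_geometric_of_norm_lt_one (𝕜 := ℝ)
    (r := 1/2) (by rw [Real.norm_eq_abs, abs_of_pos] <;> norm_num)
  have h2 : ∑' n : ℕ, ((n : ℝ) * (1/2 : ℝ) ^ n) * (1/2 : ℝ)
      = ((1/2 : ℝ) / (1 - 1/2) ^ 2) * (1/2) := by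
    rw [tsum_mul_right, h]
  calc ∑' n : ℕ, ((n : ℝ)) * (1/2 : ℝ) ^ (n + 1)
      = ∑' n : ℕ, ((n : ℝ) * (1/2 : ℝ) ^ n) * (1/2 : ℝ) := by
        congr 1; ext n; rw [pow_succ]; ring
    _ = 1 := by rw [h2]; norm_num

/-- Key probabilistic estimate: if (G_i) are i.i.d. geometric(1/2) random variables on
{0,1,2,…} (so P(G_i = j) = 2^{−j−1}), N_ℓ = G_1 + ⋯ + G_ℓ, and τ is an independent
ℕ-valued random variable with m^{1−θ}·P(τ > m) → a, then ℓ^{1−θ}·P(τ > N_ℓ) → a. -/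
theorem tail_through_geometric_time_change
    {Ω : Type*} [MeasurableSpace Ω] (μ : Measure Ω) [IsProbabilityMeasure μ]
    (θ a : ℝ) (hθ : θ ∈ Set.Ioo (0 : ℝ) 1) (ha : 0 < a)
    (G : ℕ → Ω → ℕ) (τ : Ω → ℕ)
    (hGmeas : ∀ i, Measurable (G i)) (hτmeas : Measurable τ)
    (hiid : iIndepFun G μ)
    (hgeom : ∀ i, ∀ j : ℕ, μ {ω | G i ω = j} = (2 : ENNReal)⁻¹ ^ (j + 1))
    (hτindep : IndepFun τ (fun ω i => G i ω) μ)
    (htail : Tendsto (fun m : ℕ => (m : ℝ) ^ (1 - θ) * (μ {ω | m < τ ω}).toReal)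
      atTop (nhds a)) :
    Tendsto
      (fun ℓ : ℕ =>
        (ℓ : ℝ) ^ (1 - θ) * (μ {ω | (∑ i ∈ Finset.range ℓ, G i ω) < τ ω}).toReal)
      atTop (nhds a) := by
  obtain ⟨hθ0, hθ1⟩ := hθ
  have hcast : Measurable (Nat.cast : ℕ → ℝ) := measurable_from_top
  set X : ℕ → Ω → ℝ := fun i ω => (G i ω : ℝ) with hXdef
  have hXmeas : ∀ i, Measurable (X i) := fun i => hcast.comp (hGmeas i)
  -- first moment
  have hmom1 : ∀ i, Integrable (X i) μ ∧ ∫ ω, X i ω ∂μ = 1 := by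
    intro i
    have h := geom_moment μ (G i) (hGmeas i) (hgeom i) (fun n => (n : ℝ))
      (fun n => n.cast_nonneg) (by simpa using summable_geom_mul 1)
    exact ⟨h.1, by rw [h.2, tsum_geom_one]⟩
  -- second moment
  set M2 : ℝ := ∑' n : ℕ, ((n : ℝ)) ^ 2 * (1/2 : ℝ) ^ (n + 1) with hM2def
  have hmom2 : ∀ i, Integrable (fun ω => (X i ω) ^ 2) μ ∧ ∫ ω, (X i ω) ^ 2 ∂μ = M2 := by
    intro i
    exact geom_moment μ (G i) (hGmeas i) (hgeom i) (fun n => ((n : ℝ)) ^ 2)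
      (fun n => sq_nonneg _) (summable_geom_mul 2)
  have hmem2 : ∀ i, MemLp (X i) 2 μ := by
    intro i
    refine (memLp_two_iff_integrable_sq (hXmeas i).aestronglyMeasurable).mpr ?_
    exact (hmom2 i).1.congr (by filter_upwards with ω; simp [Pi.pow_apply])
  set V : ℝ := M2 - 1 with hVdef
  have hvar : ∀ i, variance (X i) μ = V := by
    intro i
    rw [variance_eq_sub (hmem2 i)]
    have h2 : μ[(X i) ^ 2] = M2 := by
      rw [show ((X i) ^ 2 : Ω → ℝ) = fun ω => (X i ω) ^ 2 from rfl]
      exact (hmom2 i).2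
    rw [h2, (hmom1 i).2, hVdef]; norm_num
  have hV0 : 0 ≤ V := by rw [← hvar 0]; exact variance_nonneg _ _
  -- sum facts
  have hSmem : ∀ ℓ : ℕ, MemLp (∑ i ∈ Finset.range ℓ, X i) 2 μ :=
    fun ℓ => memLp_finsetSum' _ fun i _ => hmem2 i
  have hSmean : ∀ ℓ : ℕ, ∫ ω, (∑ i ∈ Finset.range ℓ, X i) ω ∂μ = (ℓ : ℝ) := by
    intro ℓ
    simp only [Finset.sum_apply]
    rw [integral_finset_sum _ fun i _ => (hmom1 i).1]
    simp [(fun i => (hmom1 i).2)]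
  have hSvar : ∀ ℓ : ℕ, variance (∑ i ∈ Finset.range ℓ, X i) μ = ℓ * V := by
    intro ℓ
    rw [IndepFun.variance_sum (fun i _ => hmem2 i)
      (fun i _ j _ hij => (hiid.indepFun hij).comp hcast hcast)]
    simp [hvar]
  -- Chebyshev
  have cheb : ∀ ℓ : ℕ, 1 ≤ ℓ → ∀ ε : ℝ, 0 < ε →
      (μ {ω | ε * ℓ ≤ |(∑ i ∈ Finset.range ℓ, X i) ω - (ℓ : ℝ)|}).toReal
        ≤ V / (ε ^ 2 * ℓ) := by
    intro ℓ hℓ ε hε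
    have hℓpos : (0 : ℝ) < ℓ := by exact_mod_cast hℓ
    have hc : (0 : ℝ) < ε * ℓ := mul_pos hε hℓpos
    have h := meas_ge_le_variance_div_sq (μ := μ) (hSmem ℓ) hc
    rw [hSmean ℓ, hSvar ℓ] at h
    have heq : (ℓ : ℝ) * V / (ε * ℓ) ^ 2 = V / (ε ^ 2 * ℓ) := by
      field_simp
    rw [heq] at h
    calc (μ {ω | ε * ℓ ≤ |(∑ i ∈ Finset.range ℓ, X i) ω - (ℓ : ℝ)|}).toReal
        ≤ (ENNReal.ofReal (V / (ε ^ 2 * ℓ))).toReal :=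
          ENNReal.toReal_mono ENNReal.ofReal_ne_top h
      _ = V / (ε ^ 2 * ℓ) := ENNReal.toReal_ofReal (by positivity)
  -- the tail function
  set f : ℕ → ℝ := fun k => (μ {ω | k < τ ω}).toReal with hfdef
  have hf_nonneg : ∀ k, 0 ≤ f k := fun k => ENNReal.toReal_nonneg
  have hf_le_one : ∀ k, f k ≤ 1 := by
    intro k
    have : μ {ω | k < τ ω} ≤ 1 := prob_le_one
    calc f k ≤ (1 : ENNReal).toReal := ENNReal.toReal_mono (by simp) this
      _ = 1 := by simp
  -- limit lemma
  have L : ∀ c : ℝ, 0 < c → ∀ m : ℕ → ℕ,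
      Tendsto (fun ℓ : ℕ => (m ℓ : ℝ) / ℓ) atTop (𝓝 c) →
      Tendsto (fun ℓ : ℕ => (ℓ : ℝ) ^ (1 - θ) * f (m ℓ)) atTop (𝓝 (a * c ^ (θ - 1))) := by
    intro c hc m hm
    have hmR : Tendsto (fun ℓ : ℕ => (m ℓ : ℝ)) atTop atTop := by
      have hev : ∀ᶠ ℓ : ℕ in atTop, c / 2 * ℓ ≤ (m ℓ : ℝ) := by
        filter_upwards [hm.eventually_const_lt (half_lt_self hc), eventually_ge_atTop 1]
          with ℓ h1 h2
        have hℓpos : (0 : ℝ) < ℓ := by exact_mod_cast h2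
        have := mul_le_mul_of_nonneg_right h1.le hℓpos.le
        rwa [div_mul_cancel₀ _ hℓpos.ne'] at this
      exact tendsto_atTop_mono' atTop hev
        (Tendsto.const_mul_atTop (half_pos hc) tendsto_natCast_atTop_atTop)
    have hmtop : Tendsto m atTop atTop := tendsto_natCast_atTop_iff.mp hmR
    have h1 : Tendsto (fun ℓ : ℕ => (m ℓ : ℝ) ^ (1 - θ) * f (m ℓ)) atTop (𝓝 a) :=
      htail.comp hmtop
    have h2 : Tendsto (fun ℓ : ℕ => ((ℓ : ℝ) / (m ℓ)) ^ (1 - θ)) atTop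
        (𝓝 (c⁻¹ ^ (1 - θ))) := by
      have hb : Tendsto (fun ℓ : ℕ => (ℓ : ℝ) / (m ℓ)) atTop (𝓝 c⁻¹) := by
        have := hm.inv₀ hc.ne'
        refine this.congr fun ℓ => ?_
        rw [inv_div]
      exact hb.rpow_const (Or.inr (by linarith))
    have hprod := h2.mul h1
    have hval : c⁻¹ ^ (1 - θ) * a = a * c ^ (θ - 1) := by
      rw [← Real.rpow_neg_one c, ← Real.rpow_mul hc.le,
        show (-1 : ℝ) * (1 - θ) = θ - 1 by ring, mul_comm]
    rw [hval] at hprod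
    refine hprod.congr' ?_
    filter_upwards [hmtop.eventually_ge_atTop 1, eventually_ge_atTop 1] with ℓ hmℓ hℓ
    have hmpos : (0 : ℝ) < (m ℓ : ℝ) := by exact_mod_cast hmℓ
    have hℓ0 : (0 : ℝ) ≤ (ℓ : ℝ) := Nat.cast_nonneg ℓ
    rw [← mul_assoc, ← Real.mul_rpow (div_nonneg hℓ0 hmpos.le) hmpos.le,
      div_mul_cancel₀ _ hmpos.ne']
  -- floor/ceil ratio limits
  have hfloor : ∀ ε : ℝ, 0 < ε → ε < 1 →
      Tendsto (fun ℓ : ℕ => ((⌊(1 - ε) * ℓ⌋₊ : ℝ)) / ℓ) atTop (𝓝 (1 - ε)) := by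
    intro ε hε0 hε1
    have hg : Tendsto (fun ℓ : ℕ => (1 - ε) - 1 / (ℓ : ℝ)) atTop (𝓝 (1 - ε)) := by
      simpa using tendsto_one_div_atTop_nhds_zero_nat.const_sub (1 - ε)
    refine tendsto_of_tendsto_of_tendsto_of_le_of_le' hg tendsto_const_nhds ?_ ?_
    · filter_upwards [eventually_ge_atTop 1] with ℓ hℓ
      have hℓpos : (0 : ℝ) < ℓ := by exact_mod_cast hℓ
      have h1 : (1 - ε) * ℓ - 1 ≤ (⌊(1 - ε) * ℓ⌋₊ : ℝ) := by
        have := Nat.lt_floor_add_one ((1 - ε) * ℓ)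
        linarith
      rw [show (1 - ε) - 1 / (ℓ : ℝ) = ((1 - ε) * ℓ - 1) / ℓ by field_simp]
      gcongr
    · filter_upwards [eventually_ge_atTop 1] with ℓ hℓ
      have hℓpos : (0 : ℝ) < ℓ := by exact_mod_cast hℓ
      rw [div_le_iff₀ hℓpos]
      exact Nat.floor_le (mul_nonneg (by linarith) (Nat.cast_nonneg _))
  have hceil : ∀ ε : ℝ, 0 < ε →
      Tendsto (fun ℓ : ℕ => ((⌈(1 + ε) * ℓ⌉₊ : ℝ)) / ℓ) atTop (𝓝 (1 + ε)) := by
    intro ε hε0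
    have hg : Tendsto (fun ℓ : ℕ => (1 + ε) + 1 / (ℓ : ℝ)) atTop (𝓝 (1 + ε)) := by
      simpa using tendsto_one_div_atTop_nhds_zero_nat.const_add (1 + ε)
    refine tendsto_of_tendsto_of_tendsto_of_le_of_le' tendsto_const_nhds hg ?_ ?_
    · filter_upwards [eventually_ge_atTop 1] with ℓ hℓ
      have hℓpos : (0 : ℝ) < ℓ := by exact_mod_cast hℓ
      rw [le_div_iff₀ hℓpos]
      exact Nat.le_ceil _
    · filter_upwards [eventually_ge_atTop 1] with ℓ hℓ
      have hℓpos : (0 : ℝ) < ℓ := by exact_mod_cast hℓ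
      have h1 : (⌈(1 + ε) * ℓ⌉₊ : ℝ) ≤ (1 + ε) * ℓ + 1 :=
        (Nat.ceil_lt_add_one (mul_nonneg (by linarith) (Nat.cast_nonneg _))).le
      rw [show (1 + ε) + 1 / (ℓ : ℝ) = ((1 + ε) * ℓ + 1) / ℓ by field_simp]
      gcongr
  -- main argument
  rw [Metric.tendsto_nhds]
  intro δ hδ
  -- choose ε
  have hca1 : Tendsto (fun ε : ℝ => a * (1 - ε) ^ (θ - 1)) (𝓝[>] (0:ℝ)) (𝓝 a) := by
    have hct : ContinuousAt (fun t : ℝ => a * t ^ (θ - 1)) 1 :=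
      continuousAt_const.mul (Real.continuousAt_rpow_const 1 _ (Or.inl one_ne_zero))
    have hbase : Tendsto (fun ε : ℝ => 1 - ε) (𝓝 (0:ℝ)) (𝓝 1) := by
      simpa using (tendsto_id : Tendsto id (𝓝 (0:ℝ)) (𝓝 0)).const_sub (1 : ℝ)
    have h := hct.tendsto.comp hbase
    simp only [Real.one_rpow, mul_one] at h
    exact h.mono_left nhdsWithin_le_nhds
  have hca2 : Tendsto (fun ε : ℝ => a * (1 + ε) ^ (θ - 1)) (𝓝[>] (0:ℝ)) (𝓝 a) := by
    have hct : ContinuousAt (fun t : ℝ => a * t ^ (θ - 1)) 1 :=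
      continuousAt_const.mul (Real.continuousAt_rpow_const 1 _ (Or.inl one_ne_zero))
    have hbase : Tendsto (fun ε : ℝ => 1 + ε) (𝓝 (0:ℝ)) (𝓝 1) := by
      simpa using (tendsto_id : Tendsto id (𝓝 (0:ℝ)) (𝓝 0)).const_add (1 : ℝ)
    have h := hct.tendsto.comp hbase
    simp only [Real.one_rpow, mul_one] at h
    exact h.mono_left nhdsWithin_le_nhds
  have hIoo : ∀ᶠ ε in 𝓝[>] (0:ℝ), ε ∈ Set.Ioo (0:ℝ) 1 :=
    Ioo_mem_nhdsGT_of_mem (Set.left_mem_Ico.mpr one_pos)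
  have hev : ∀ᶠ ε in 𝓝[>] (0:ℝ),
      (a * (1 - ε) ^ (θ - 1) < a + δ/2 ∧ a - δ/2 < a * (1 + ε) ^ (θ - 1)) ∧
        ε ∈ Set.Ioo (0:ℝ) 1 :=
    ((hca1.eventually_lt_const (by linarith)).and
      (hca2.eventually_const_lt (by linarith))).and hIoo
  obtain ⟨ε, ⟨hub, hlb⟩, hε0, hε1⟩ := hev.exists
  set m0 : ℕ → ℕ := fun ℓ => ⌊(1 - ε) * ℓ⌋₊ with hm0def
  set m1 : ℕ → ℕ := fun ℓ => ⌈(1 + ε) * ℓ⌉₊ with hm1def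
  have hU := L (1 - ε) (by linarith) m0 (hfloor ε hε0 hε1)
  have hLo := L (1 + ε) (by linarith) m1 (hceil ε hε0)
  have hC : Tendsto (fun ℓ : ℕ => (ℓ:ℝ) ^ (1 - θ) * (V / (ε^2 * ℓ))) atTop (𝓝 0) := by
    have h1 : Tendsto (fun ℓ : ℕ => (V/ε^2) * (ℓ:ℝ) ^ (-θ)) atTop (𝓝 ((V/ε^2) * 0)) :=
      ((tendsto_rpow_neg_atTop hθ0).comp tendsto_natCast_atTop_atTop).const_mul _
    rw [mul_zero] at h1
    refine h1.congr' ?_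
    filter_upwards [eventually_ge_atTop 1] with ℓ hℓ
    have hℓpos : (0:ℝ) < ℓ := by exact_mod_cast hℓ
    have hpow : (ℓ:ℝ) ^ (-θ) = (ℓ:ℝ) ^ (1 - θ) / (ℓ:ℝ) ^ (1:ℝ) := by
      rw [← Real.rpow_sub hℓpos]; norm_num
    rw [hpow, Real.rpow_one]
    field_simp
  -- upper bound
  have hUB : ∀ᶠ ℓ : ℕ in atTop,
      (ℓ : ℝ) ^ (1 - θ) * (μ {ω | (∑ i ∈ Finset.range ℓ, G i ω) < τ ω}).toReal ≤
        (ℓ:ℝ) ^ (1 - θ) * f (m0 ℓ) + (ℓ:ℝ) ^ (1 - θ) * (V / (ε^2 * ℓ)) := by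
    filter_upwards [eventually_ge_atTop 1] with ℓ hℓ
    have hℓpos : (0:ℝ) < ℓ := by exact_mod_cast hℓ
    have hsub : {ω | (∑ i ∈ Finset.range ℓ, G i ω) < τ ω} ⊆
        {ω | m0 ℓ < τ ω} ∪ {ω | ε * ℓ ≤ |(∑ i ∈ Finset.range ℓ, X i) ω - (ℓ:ℝ)|} := by
      intro ω hω
      by_cases hB : m0 ℓ < τ ω
      · exact Or.inl hB
      · right
        push_neg at hB
        have hN : (∑ i ∈ Finset.range ℓ, G i ω) < m0 ℓ := lt_of_lt_of_le hω hB
        have hNr : ((∑ i ∈ Finset.range ℓ, G i ω : ℕ) : ℝ) + 1 ≤ (m0 ℓ : ℝ) := by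
          exact_mod_cast hN
        have hm0le : (m0 ℓ : ℝ) ≤ (1 - ε) * ℓ := Nat.floor_le (mul_nonneg (by linarith) (Nat.cast_nonneg _))
        have hSx : (∑ i ∈ Finset.range ℓ, X i) ω
            = ((∑ i ∈ Finset.range ℓ, G i ω : ℕ) : ℝ) := by
          simp [Finset.sum_apply, hXdef, Nat.cast_sum]
        show ε * ℓ ≤ |(∑ i ∈ Finset.range ℓ, X i) ω - (ℓ:ℝ)|
        rw [hSx, abs_sub_comm]
        refine le_trans ?_ (le_abs_self _)
        nlinarith
    have htoReal : (μ {ω | (∑ i ∈ Finset.range ℓ, G i ω) < τ ω}).toReal ≤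
        f (m0 ℓ) + V / (ε^2 * ℓ) := by
      have h1 : (μ {ω | (∑ i ∈ Finset.range ℓ, G i ω) < τ ω}).toReal ≤
          (μ {ω | m0 ℓ < τ ω}).toReal +
            (μ {ω | ε * ℓ ≤ |(∑ i ∈ Finset.range ℓ, X i) ω - (ℓ:ℝ)|}).toReal := by
        rw [← ENNReal.toReal_add (measure_ne_top μ _) (measure_ne_top μ _)]
        exact ENNReal.toReal_mono
          (by exact ENNReal.add_ne_top.mpr ⟨measure_ne_top μ _, measure_ne_top μ _⟩)
          ((measure_mono hsub).trans (measure_union_le _ _))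
      exact h1.trans (add_le_add le_rfl (cheb ℓ hℓ ε hε0))
    have hmul := mul_le_mul_of_nonneg_left htoReal
      (Real.rpow_nonneg (Nat.cast_nonneg ℓ) (1 - θ))
    rw [mul_add] at hmul
    exact hmul
  -- lower bound
  have hLB : ∀ᶠ ℓ : ℕ in atTop,
      (ℓ:ℝ) ^ (1 - θ) * f (m1 ℓ) - (ℓ:ℝ) ^ (1 - θ) * (V / (ε^2 * ℓ)) ≤
        (ℓ : ℝ) ^ (1 - θ) * (μ {ω | (∑ i ∈ Finset.range ℓ, G i ω) < τ ω}).toReal := by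
    filter_upwards [eventually_ge_atTop 1] with ℓ hℓ
    have hℓpos : (0:ℝ) < ℓ := by exact_mod_cast hℓ
    have hsub : {ω | m1 ℓ < τ ω} ∩ {ω | (∑ i ∈ Finset.range ℓ, G i ω) ≤ m1 ℓ} ⊆
        {ω | (∑ i ∈ Finset.range ℓ, G i ω) < τ ω} := by
      intro ω hω
      simp only [Set.mem_inter_iff, Set.mem_setOf_eq] at hω ⊢
      exact lt_of_le_of_lt hω.2 hω.1
    have hmulindep : μ ({ω | m1 ℓ < τ ω} ∩ {ω | (∑ i ∈ Finset.range ℓ, G i ω) ≤ m1 ℓ})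
        = μ {ω | m1 ℓ < τ ω} * μ {ω | (∑ i ∈ Finset.range ℓ, G i ω) ≤ m1 ℓ} := by
      have h := (indepFun_iff_measure_inter_preimage_eq_mul.mp hτindep)
        {k : ℕ | m1 ℓ < k} {g : ℕ → ℕ | (∑ i ∈ Finset.range ℓ, g i) ≤ m1 ℓ}
        MeasurableSet.of_discrete
        ((Finset.measurable_sum (Finset.range ℓ)
          (fun i _ => measurable_pi_apply i))
          (show MeasurableSet {k : ℕ | k ≤ m1 ℓ} from .of_discrete))
      exact h
    -- complement and chebyshev
    have hmeasgt : MeasurableSet {ω | m1 ℓ < ∑ i ∈ Finset.range ℓ, G i ω} :=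
      (Finset.measurable_sum (Finset.range ℓ) (fun i _ => hGmeas i))
        (show MeasurableSet {k : ℕ | m1 ℓ < k} from .of_discrete)
    have hEc : (μ {ω | (∑ i ∈ Finset.range ℓ, G i ω) ≤ m1 ℓ}).toReal
        = 1 - (μ {ω | m1 ℓ < ∑ i ∈ Finset.range ℓ, G i ω}).toReal := by
      have hset : {ω | (∑ i ∈ Finset.range ℓ, G i ω) ≤ m1 ℓ}
          = {ω | m1 ℓ < ∑ i ∈ Finset.range ℓ, G i ω}ᶜ := by
        ext ω; simp [not_lt]
      rw [hset, prob_compl_eq_one_sub hmeasgt,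
        ENNReal.toReal_sub_of_le prob_le_one ENNReal.one_ne_top, ENNReal.toReal_one]
    have hp : (μ {ω | m1 ℓ < ∑ i ∈ Finset.range ℓ, G i ω}).toReal ≤ V / (ε^2 * ℓ) := by
      refine le_trans ?_ (cheb ℓ hℓ ε hε0)
      refine ENNReal.toReal_mono (measure_ne_top μ _) (measure_mono ?_)
      intro ω hω
      have hS : (m1 ℓ) < (∑ i ∈ Finset.range ℓ, G i ω) := hω
      have hm1ge : (1 + ε) * ℓ ≤ (m1 ℓ : ℝ) := Nat.le_ceil _
      have hNr : (m1 ℓ : ℝ) + 1 ≤ ((∑ i ∈ Finset.range ℓ, G i ω : ℕ) : ℝ) := by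
        exact_mod_cast hS
      have hSx : (∑ i ∈ Finset.range ℓ, X i) ω
          = ((∑ i ∈ Finset.range ℓ, G i ω : ℕ) : ℝ) := by
        simp [Finset.sum_apply, hXdef, Nat.cast_sum]
      show ε * ℓ ≤ |(∑ i ∈ Finset.range ℓ, X i) ω - (ℓ:ℝ)|
      rw [hSx]
      refine le_trans ?_ (le_abs_self _)
      nlinarith
    have hpnonneg : (0:ℝ) ≤ (μ {ω | m1 ℓ < ∑ i ∈ Finset.range ℓ, G i ω}).toReal :=
      ENNReal.toReal_nonneg
    have hlow : f (m1 ℓ) - V / (ε^2 * ℓ) ≤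
        (μ {ω | (∑ i ∈ Finset.range ℓ, G i ω) < τ ω}).toReal := by
      have h1 : (μ ({ω | m1 ℓ < τ ω} ∩
          {ω | (∑ i ∈ Finset.range ℓ, G i ω) ≤ m1 ℓ})).toReal ≤
          (μ {ω | (∑ i ∈ Finset.range ℓ, G i ω) < τ ω}).toReal :=
        ENNReal.toReal_mono (measure_ne_top μ _) (measure_mono hsub)
      rw [hmulindep, ENNReal.toReal_mul, hEc] at h1
      have hfub := hf_le_one (m1 ℓ)
      have hfnn := hf_nonneg (m1 ℓ)
      nlinarith
    have hmul := mul_le_mul_of_nonneg_left hlow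
      (Real.rpow_nonneg (Nat.cast_nonneg ℓ) (1 - θ))
    rw [mul_sub] at hmul
    exact hmul
  -- combine
  filter_upwards [hU.eventually_lt_const hub, hLo.eventually_const_lt hlb,
    hC.eventually_lt_const (half_pos hδ), hUB, hLB] with ℓ h1 h2 h3 h4 h5
  have hcheb_nonneg : (0:ℝ) ≤ (ℓ:ℝ) ^ (1 - θ) * (V / (ε^2 * ℓ)) := by positivity
  rw [Real.dist_eq, abs_sub_lt_iff]
  constructor <;> linarith
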